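/- arXiv:1704.06252 — 2 statements merged into one kernel-verified Lean document; each statement's English description precedes it below -/
import Mathlib

section
/- Let V₊ and V₋ be finite-dimensional complex vector spaces and u₊ : V₊ → V₊, u₋ : V₋ → V₋ linear endomorphisms such that tr(u₊ⁿ) − tr(u₋ⁿ) is a rational number for every n ≥ 1. Then the formal power series Z(t) := exp( Σ_{n ≥ 1} ( tr(u₊ⁿ) − tr(u₋ⁿ) ) tⁿ/n ) ∈ ℚ⟦t⟧ is rational, i.e. there exist polynomials p(t), q(t) ∈ ℚ[t] with q(t) ≠ 0 such that q(t)·Z(t) = p(t) in ℚ⟦t⟧. Moreover, if u₊ and u₋ are invertible, then p and q can be chosen with q(0) = p(0) = 1 and deg q(t) − deg p(t) = dim V₊ − dim V₋. -/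
/-- The exponential `exp f = Σ_{m ≥ 0} f^m / m!` of a formal power series `f`
(with zero constant term) over a `ℚ`-algebra, defined coefficientwise: since the
constant term of `f` is zero, only the terms with `m ≤ n` contribute to the
`n`-th coefficient. -/
noncomputable def PowerSeries.expOf {R : Type*} [CommRing R] [Algebra ℚ R]
    (f : PowerSeries R) : PowerSeries R :=
  PowerSeries.mk fun n =>
    ∑ m ∈ Finset.range (n + 1),
      algebraMap ℚ R (1 / m.factorial) * PowerSeries.coeff n (f ^ m)

set_option linter.unusedSectionVars false

open PowerSeries

namespace ZetaAux

variable {R : Type*} [CommRing R] [Algebra ℚ R]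

lemma coeff_pow_eq_zero {f : R⟦X⟧} (hf : constantCoeff f = 0) {n m : ℕ} (h : n < m) :
    PowerSeries.coeff n (f ^ m) = 0 :=
  (X_pow_dvd_iff.mp (pow_dvd_pow_of_dvd (X_dvd_iff.mpr hf) m)) n h

lemma coeff_mul_pow_eq_zero {f g : R⟦X⟧} (hf : constantCoeff f = 0) {n m : ℕ} (h : n < m) :
    PowerSeries.coeff n (g * f ^ m) = 0 :=
  (X_pow_dvd_iff.mp (Dvd.dvd.mul_left (pow_dvd_pow_of_dvd (X_dvd_iff.mpr hf) m) g)) n h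

/-- partial sums of the exponential -/
noncomputable def pexp (f : R⟦X⟧) (N : ℕ) : R⟦X⟧ :=
  ∑ m ∈ Finset.range N, PowerSeries.C (algebraMap ℚ R (1 / m.factorial)) * f ^ m

lemma coeff_pexp (f : R⟦X⟧) (N n : ℕ) :
    PowerSeries.coeff n (pexp f N) =
      ∑ m ∈ Finset.range N, algebraMap ℚ R (1 / m.factorial) * PowerSeries.coeff n (f ^ m) := by
  rw [pexp, map_sum]
  exact Finset.sum_congr rfl fun m _ => by rw [PowerSeries.coeff_C_mul]

lemma coeff_expOf (f : R⟦X⟧) (n : ℕ) :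
    PowerSeries.coeff n (PowerSeries.expOf f) = PowerSeries.coeff n (pexp f (n + 1)) := by
  rw [coeff_pexp, PowerSeries.expOf, coeff_mk]

lemma coeff_expOf_eq_pexp {f : R⟦X⟧} (hf : constantCoeff f = 0) {N n : ℕ} (h : n < N) :
    PowerSeries.coeff n (PowerSeries.expOf f) = PowerSeries.coeff n (pexp f N) := by
  rw [coeff_expOf, coeff_pexp, coeff_pexp]
  refine Finset.sum_subset (Finset.range_subset_range.mpr h) ?_
  intro m _ hm
  rw [coeff_pow_eq_zero hf (by simpa using hm), mul_zero]

@[simp] lemma constantCoeff_expOf (f : R⟦X⟧) :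
    constantCoeff (PowerSeries.expOf f) = 1 := by
  rw [← coeff_zero_eq_constantCoeff_apply, coeff_expOf, coeff_pexp]
  simp

@[simp] lemma expOf_zero : PowerSeries.expOf (0 : R⟦X⟧) = 1 := by
  ext n
  rw [coeff_expOf, coeff_pexp]
  rcases Nat.eq_zero_or_pos n with h | h
  · subst h; simp
  · rw [Finset.sum_eq_zero, PowerSeries.coeff_one, if_neg h.ne']
    intro m hm
    rcases Nat.eq_zero_or_pos m with h0 | h0
    · subst h0; simp [PowerSeries.coeff_one, h.ne']
    · rw [zero_pow h0.ne', map_zero, mul_zero]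

lemma fact_key (m : ℕ) :
    algebraMap ℚ R (1 / (m + 1).factorial) * ((m + 1 : ℕ) : R) = algebraMap ℚ R (1 / m.factorial) := by
  rw [← map_natCast (algebraMap ℚ R) (m + 1), ← map_mul]
  congr 1
  have h1 : ((m + 1 : ℕ) : ℚ) ≠ 0 := Nat.cast_ne_zero.mpr (Nat.succ_ne_zero m)
  have h2 : ((m.factorial : ℕ) : ℚ) ≠ 0 := Nat.cast_ne_zero.mpr m.factorial_ne_zero
  rw [Nat.factorial_succ]
  push_cast
  field_simp

lemma derivative_pexp (f : R⟦X⟧) (N : ℕ) :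
    d⁄dX R (pexp f (N + 1)) = d⁄dX R f * pexp f N := by
  rw [pexp, map_sum, Finset.sum_range_succ']
  have h0 : d⁄dX R (PowerSeries.C (algebraMap ℚ R (1 / Nat.factorial 0)) * f ^ 0) = 0 := by
    simp
  rw [h0, add_zero, pexp, Finset.mul_sum]
  refine Finset.sum_congr rfl fun m _ => ?_
  rw [Derivation.leibniz, Derivation.leibniz_pow, derivative_C, smul_zero, add_zero]
  rw [Nat.add_sub_cancel]
  simp only [smul_eq_mul, nsmul_eq_mul]
  rw [show ((m + 1 : ℕ) : R⟦X⟧) = PowerSeries.C ((m + 1 : ℕ) : R) from by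
    rw [map_natCast]]
  rw [show PowerSeries.C (algebraMap ℚ R (1 / (m + 1).factorial)) *
      (PowerSeries.C ((m + 1 : ℕ) : R) * (f ^ m * d⁄dX R f)) =
      (PowerSeries.C (algebraMap ℚ R (1 / (m + 1).factorial)) * PowerSeries.C ((m + 1 : ℕ) : R))
        * (f ^ m * d⁄dX R f) from by ring]
  rw [← map_mul, fact_key]
  ring

lemma derivative_expOf {f : R⟦X⟧} (hf : constantCoeff f = 0) :
    d⁄dX R (PowerSeries.expOf f) = d⁄dX R f * PowerSeries.expOf f := by
  ext n
  rw [coeff_derivative, coeff_expOf_eq_pexp hf (show n + 1 < n + 2 by omega),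
    ← coeff_derivative, derivative_pexp, PowerSeries.coeff_mul, PowerSeries.coeff_mul]
  refine Finset.sum_congr rfl fun p hp => ?_
  rw [Finset.HasAntidiagonal.mem_antidiagonal] at hp
  rw [coeff_expOf_eq_pexp hf (show p.2 < n + 1 by omega)]

lemma eq_zero_of_derivative_eq_mul {a h : R⟦X⟧} (hd : d⁄dX R h = a * h)
    (h0 : constantCoeff h = 0) : h = 0 := by
  ext n
  rw [map_zero]
  induction n using Nat.strong_induction_on with
  | _ n ih =>
    match n with
    | 0 => rw [coeff_zero_eq_constantCoeff_apply]; exact h0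
    | Nat.succ n =>
      have h1 : PowerSeries.coeff n (d⁄dX R h) = 0 := by
        rw [hd, PowerSeries.coeff_mul]
        refine Finset.sum_eq_zero fun p hp => ?_
        rw [Finset.HasAntidiagonal.mem_antidiagonal] at hp
        rw [ih p.2 (by omega), mul_zero]
      rw [coeff_derivative] at h1
      have inv : ((n : R) + 1) * algebraMap ℚ R (((n : ℚ) + 1))⁻¹ = 1 := by
        rw [show ((n : R) + 1) = algebraMap ℚ R ((n : ℚ) + 1) from by push_cast; simp,
          ← map_mul, mul_inv_cancel₀ (by positivity), map_one]
      calc PowerSeries.coeff (n + 1) h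
          = PowerSeries.coeff (n + 1) h * (((n : R) + 1) * algebraMap ℚ R (((n : ℚ) + 1))⁻¹) := by
            rw [inv, mul_one]
        _ = (PowerSeries.coeff (n + 1) h * ((n : ℕ) + 1 : R)) * algebraMap ℚ R (((n : ℚ) + 1))⁻¹ := by
            ring
        _ = 0 := by rw [show ((n : ℕ) + 1 : R) = ((n + 1 : ℕ) : R) from by push_cast; ring] at h1 ⊢; rw [h1, zero_mul]

lemma expOf_add {f g : R⟦X⟧} (hf : constantCoeff f = 0) (hg : constantCoeff g = 0) :
    PowerSeries.expOf (f + g) = PowerSeries.expOf f * PowerSeries.expOf g := by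
  have hfg : constantCoeff (f + g) = 0 := by rw [map_add, hf, hg, add_zero]
  have key : PowerSeries.expOf (f + g) - PowerSeries.expOf f * PowerSeries.expOf g = 0 := by
    refine eq_zero_of_derivative_eq_mul (a := d⁄dX R (f + g)) ?_ ?_
    · rw [map_sub, Derivation.leibniz, derivative_expOf hf, derivative_expOf hg,
        derivative_expOf hfg]
      simp only [smul_eq_mul, map_add]
      ring
    · simp [map_sub, map_mul]
  linear_combination key

end ZetaAux
section MapAndEigen

open PowerSeries
namespace ZetaAux

variable {K : Type*} [Field K] [Algebra ℚ K] [CharZero K]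

lemma map_expOf (f : PowerSeries ℚ) :
    PowerSeries.map (algebraMap ℚ K) (PowerSeries.expOf f) =
      PowerSeries.expOf (PowerSeries.map (algebraMap ℚ K) f) := by
  ext n
  rw [PowerSeries.coeff_map, PowerSeries.expOf, PowerSeries.expOf, coeff_mk, coeff_mk, map_sum]
  refine Finset.sum_congr rfl fun m _ => ?_
  rw [map_mul, ← PowerSeries.coeff_map, map_pow]
  rfl

/-- the series Σ_{n ≥ 1} l^n t^n / n -/
noncomputable def lseries (l : K) : K⟦X⟧ :=
  PowerSeries.mk fun n => if n = 0 then 0 else l ^ n / n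

@[simp] lemma constantCoeff_lseries (l : K) : constantCoeff (lseries l) = 0 := by
  rw [← coeff_zero_eq_constantCoeff_apply, lseries, coeff_mk, if_pos rfl]

lemma geom_eq_one (l : K) : (1 - PowerSeries.C l * X) * PowerSeries.mk (fun n => l ^ n) = 1 := by
  ext n
  rw [sub_mul, one_mul, map_sub, mul_assoc]
  match n with
  | 0 =>
    rw [PowerSeries.coeff_zero_eq_constantCoeff_apply, PowerSeries.coeff_zero_eq_constantCoeff_apply]
    simp
  | Nat.succ n =>
    rw [PowerSeries.coeff_C_mul, PowerSeries.coeff_succ_X_mul, coeff_mk, coeff_mk,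
      PowerSeries.coeff_one, if_neg (Nat.succ_ne_zero n)]
    rw [pow_succ]
    ring

lemma derivative_lseries (l : K) :
    d⁄dX K (lseries l) = PowerSeries.C l * PowerSeries.mk (fun n => l ^ n) := by
  ext n
  rw [coeff_derivative, lseries, coeff_mk, if_neg (Nat.succ_ne_zero n), PowerSeries.coeff_C_mul,
    coeff_mk]
  have hn : ((n : K) + 1) ≠ 0 := by
    have : ((n + 1 : ℕ) : K) ≠ 0 := Nat.cast_ne_zero.mpr (Nat.succ_ne_zero n)
    push_cast at this; exact this
  field_simp
  rw [pow_succ]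
  push_cast
  ring

lemma one_sub_mul_expOf_lseries (l : K) :
    (1 - PowerSeries.C l * X) * PowerSeries.expOf (lseries l) = 1 := by
  have hd : d⁄dX K ((1 - PowerSeries.C l * X) * PowerSeries.expOf (lseries l)) = 0 := by
    rw [Derivation.leibniz, derivative_expOf (constantCoeff_lseries l), derivative_lseries]
    have hX : d⁄dX K (1 - PowerSeries.C l * X : K⟦X⟧) = - PowerSeries.C l := by
      rw [map_sub, Derivation.map_one_eq_zero, zero_sub, Derivation.leibniz, derivative_C, smul_zero,
        add_zero, derivative_X, smul_eq_mul, mul_one]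
    rw [hX]
    simp only [smul_eq_mul]
    have := geom_eq_one l
    calc (1 - PowerSeries.C l * X) * (PowerSeries.C l * PowerSeries.mk (fun n => l ^ n)
            * PowerSeries.expOf (lseries l))
          + PowerSeries.expOf (lseries l) * -PowerSeries.C l
        = PowerSeries.C l * PowerSeries.expOf (lseries l) *
            ((1 - PowerSeries.C l * X) * PowerSeries.mk (fun n => l ^ n) - 1) := by ring
      _ = 0 := by rw [geom_eq_one l, sub_self, mul_zero]
  have hc : constantCoeff ((1 - PowerSeries.C l * X) * PowerSeries.expOf (lseries l)) =
      constantCoeff 1 := by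
    rw [map_mul, constantCoeff_expOf, map_sub, map_mul, constantCoeff_X]
    simp
  exact derivative.ext (by rw [hd, Derivation.map_one_eq_zero]) hc

/-- the series Σ_{n ≥ 1} (Σ_{l ∈ s} l^n) t^n / n -/
noncomputable def fseries (s : Multiset K) : K⟦X⟧ :=
  PowerSeries.mk fun n => if n = 0 then 0 else (s.map (· ^ n)).sum / n

@[simp] lemma constantCoeff_fseries (s : Multiset K) : constantCoeff (fseries s) = 0 := by
  rw [← coeff_zero_eq_constantCoeff_apply, fseries, coeff_mk, if_pos rfl]

lemma fseries_zero : fseries (0 : Multiset K) = 0 := by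
  ext n
  rw [fseries, coeff_mk, map_zero]
  simp

lemma fseries_cons (l : K) (s : Multiset K) : fseries (l ::ₘ s) = lseries l + fseries s := by
  ext n
  rw [fseries, coeff_mk, map_add, lseries, coeff_mk, fseries, coeff_mk]
  by_cases h : n = 0
  · simp [h]
  · rw [if_neg h, if_neg h, if_neg h, Multiset.map_cons, Multiset.sum_cons, add_div]

lemma prod_mul_expOf_fseries (s : Multiset K) :
    (s.map fun l => 1 - PowerSeries.C l * X).prod * PowerSeries.expOf (fseries s) = 1 := by
  induction s using Multiset.induction with
  | empty => simp [fseries_zero]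
  | cons l s ih =>
    rw [Multiset.map_cons, Multiset.prod_cons, fseries_cons,
      expOf_add (constantCoeff_lseries l) (constantCoeff_fseries s)]
    calc (1 - PowerSeries.C l * X) * (s.map fun l => 1 - PowerSeries.C l * X).prod *
          (PowerSeries.expOf (lseries l) * PowerSeries.expOf (fseries s))
        = ((1 - PowerSeries.C l * X) * PowerSeries.expOf (lseries l)) *
            ((s.map fun l => 1 - PowerSeries.C l * X).prod * PowerSeries.expOf (fseries s)) := by
          ring
      _ = 1 := by rw [one_sub_mul_expOf_lseries, ih, mul_one]

end ZetaAux
end MapAndEigen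
section Eigen
namespace ZetaAux

open Module

lemma trace_pow_of_nilpotent_sub {W : Type*} [AddCommGroup W] [Module ℂ W]
    [FiniteDimensional ℂ W] (g : Module.End ℂ W) (μ : ℂ)
    (hg : IsNilpotent (g - algebraMap ℂ (Module.End ℂ W) μ)) (n : ℕ) :
    LinearMap.trace ℂ W (g ^ n) = μ ^ n * (Module.finrank ℂ W : ℂ) := by
  induction n with
  | zero => rw [pow_zero, pow_zero, one_mul, LinearMap.trace_one]
  | succ n ih =>
    rw [pow_succ, Module.End.mul_eq_comp,
      LinearMap.trace_comp_eq_mul_of_commute_of_isNilpotent μ ((Commute.refl g).pow_left n) hg,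
      ih, pow_succ]
    ring

lemma multiset_sum_map_sum {α β γ : Type*} [DecidableEq α] [AddCommMonoid γ]
    (t : Finset α) (g : α → Multiset β) (f : β → γ) :
    ((∑ μ ∈ t, g μ).map f).sum = ∑ μ ∈ t, ((g μ).map f).sum := by
  classical
  induction t using Finset.cons_induction with
  | empty => simp
  | cons a t ha ih => rw [Finset.sum_cons, Finset.sum_cons, Multiset.map_add,
      Multiset.sum_add, ih]

lemma exists_eigen_multiset {V : Type*} [AddCommGroup V] [Module ℂ V] [FiniteDimensional ℂ V]
    (u : Module.End ℂ V) :
    ∃ s : Multiset ℂ, Multiset.card s = Module.finrank ℂ V ∧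
      (∀ n : ℕ, LinearMap.trace ℂ V (u ^ n) = ((s.map (· ^ n)).sum)) ∧
      (IsUnit u → (0 : ℂ) ∉ s) := by
  classical
  have hN : {μ : ℂ | u.maxGenEigenspace μ ≠ ⊥}.Finite :=
    WellFoundedGT.finite_ne_bot_of_iSupIndep
      u.independent_maxGenEigenspace
  have hds : DirectSum.IsInternal u.maxGenEigenspace :=
    DirectSum.isInternal_submodule_of_iSupIndep_of_iSup_eq_top
      (Module.End.independent_maxGenEigenspace _)
      (Module.End.iSup_maxGenEigenspace_eq_top _)
  set s : Multiset ℂ := ∑ μ ∈ hN.toFinset,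
    Multiset.replicate (Module.finrank ℂ (u.maxGenEigenspace μ)) μ with hs
  have tr : ∀ n : ℕ, LinearMap.trace ℂ V (u ^ n)
      = ∑ μ ∈ hN.toFinset,
          μ ^ n * (Module.finrank ℂ (u.maxGenEigenspace μ) : ℂ) := by
    intro n
    have hf : ∀ μ : ℂ, Set.MapsTo (u ^ n) (u.maxGenEigenspace μ)
        (u.maxGenEigenspace μ) :=
      fun μ => Module.End.mapsTo_maxGenEigenspace_of_comm ((Commute.refl u).pow_right n) μ
    rw [LinearMap.trace_eq_sum_trace_restrict' hds hN hf]
    refine Finset.sum_congr rfl fun μ _ => ?_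
    have h1 : ∀ x ∈ u.maxGenEigenspace μ,
        u x ∈ u.maxGenEigenspace μ :=
      Module.End.mapsTo_maxGenEigenspace_of_comm rfl μ
    have h2 := Module.End.pow_restrict (f' := u) (p := u.maxGenEigenspace μ) n h1
    have h3 : (u ^ n).restrict (hf μ) = (u.restrict h1) ^ n := by rw [h2]
    rw [h3]
    exact trace_pow_of_nilpotent_sub _ μ
      (u.isNilpotent_restrict_maxGenEigenspace_sub_algebraMap μ) n
  have trs : ∀ n : ℕ, LinearMap.trace ℂ V (u ^ n) = ((s.map (· ^ n)).sum) := by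
    intro n
    rw [tr n, hs, multiset_sum_map_sum]
    refine Finset.sum_congr rfl fun μ _ => ?_
    rw [Multiset.map_replicate, Multiset.sum_replicate, nsmul_eq_mul]
    ring
  refine ⟨s, ?_, trs, ?_⟩
  · -- cardinality
    have h0 := trs 0
    rw [pow_zero, LinearMap.trace_one] at h0
    have hcard : ((Module.finrank ℂ V : ℕ) : ℂ) = (Multiset.card s : ℂ) := by
      rw [h0]
      simp [pow_zero]
    exact_mod_cast hcard.symm
  · intro hu hmem
    rw [hs, Multiset.mem_sum] at hmem
    obtain ⟨μ, hμt, h0⟩ := hmem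
    have hμ0 : μ = 0 := (Multiset.eq_of_mem_replicate h0).symm
    subst hμ0
    rw [Set.Finite.mem_toFinset] at hμt
    obtain ⟨x, hx, hx0⟩ := Submodule.exists_mem_ne_zero_of_ne_bot hμt
    rw [Module.End.mem_maxGenEigenspace] at hx
    obtain ⟨k, hk⟩ := hx
    simp only [zero_smul, sub_zero] at hk
    have hinj : Function.Injective (u ^ k) :=
      (Module.End.isUnit_iff _).mp (hu.pow k) |>.injective
    exact hx0 (by simpa using hinj (show (u ^ k) x = (u ^ k) 0 by simpa using hk))

end ZetaAux
end Eigen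
section Descent
namespace ZetaAux
open scoped Matrix

lemma sq_sum_zero {m : ℕ} (w : Fin m → ℚ) (h : dotProduct w w = 0) : w = 0 := by
  funext i
  have h1 : ∀ j ∈ Finset.univ, (0:ℚ) ≤ w j * w j := fun j _ => mul_self_nonneg _
  have h2 := (Finset.sum_eq_zero_iff_of_nonneg h1).mp h i (Finset.mem_univ i)
  exact mul_self_eq_zero.mp h2

lemma descent (z : ℕ → ℚ) (a N : ℕ) (haN : a ≤ N)
    (x : Fin (a+1) → ℂ) (hx : x ≠ 0)
    (hsol : ∀ n : ℕ, N < n → ∑ i : Fin (a+1), x i * ((z (n - (i:ℕ)) : ℚ) : ℂ) = 0) :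
    ∃ y : Fin (a+1) → ℚ, y ≠ 0 ∧ ∀ n : ℕ, N < n → ∑ i : Fin (a+1), y i * z (n - (i:ℕ)) = 0 := by
  classical
  set r : ℕ → (Fin (a+1) → ℚ) := fun m i => z (N + 1 + m - (i:ℕ)) with hr
  have rmono : Monotone (fun m => Submodule.span ℚ (r '' Set.Iio m)) := by
    intro m m' hmm'
    exact Submodule.span_mono (Set.image_mono (fun t ht => lt_of_lt_of_le ht hmm'))
  obtain ⟨m₀, hm₀⟩ := monotone_stabilizes_iff_noetherian.mpr inferInstance
    ⟨fun m => Submodule.span ℚ (r '' Set.Iio m), rmono⟩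
  have hrU : ∀ m, r m ∈ Submodule.span ℚ (r '' Set.Iio m₀) := by
    intro m
    have h1 : r m ∈ Submodule.span ℚ (r '' Set.Iio (max (m+1) m₀)) :=
      Submodule.subset_span ⟨m, lt_of_lt_of_le (Nat.lt_succ_self m) (le_max_left _ _), rfl⟩
    have h2 : Submodule.span ℚ (r '' Set.Iio m₀) =
        Submodule.span ℚ (r '' Set.Iio (max (m+1) m₀)) :=
      hm₀ (max (m+1) m₀) (le_max_right _ _)
    rw [h2]
    exact h1
  set M : Matrix (Fin m₀) (Fin (a+1)) ℚ := Matrix.of (fun m i => r m i) with hM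
  by_cases hker : ∃ y : Fin (a+1) → ℚ, y ≠ 0 ∧ M.mulVec y = 0
  · obtain ⟨y, hy0, hy⟩ := hker
    refine ⟨y, hy0, ?_⟩
    have hgen : ∀ v ∈ Submodule.span ℚ (r '' Set.Iio m₀), dotProduct v y = 0 := by
      intro v hv
      induction hv using Submodule.span_induction with
      | mem v hvm =>
        obtain ⟨k, hk, rfl⟩ := hvm
        have := congrFun hy ⟨k, hk⟩
        simpa [Matrix.mulVec, hM] using this
      | zero => simp
      | add v w _ _ hv hw => rw [add_dotProduct, hv, hw, add_zero]
      | smul c v _ hv => rw [smul_dotProduct, hv, smul_zero]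
    intro n hn
    have hd := hgen (r (n - (N+1))) (hrU _)
    rw [dotProduct] at hd
    calc ∑ i : Fin (a+1), y i * z (n - (i:ℕ))
        = ∑ i : Fin (a+1), r (n - (N+1)) i * y i := Finset.sum_congr rfl (fun i _ => by
          rw [show r (n - (N+1)) i = z (n - (i:ℕ)) from by
            show z (N + 1 + (n - (N+1)) - (i:ℕ)) = z (n - (i:ℕ))
            congr 1
            omega]
          rw [mul_comm])
      _ = 0 := hd
  · exfalso
    push_neg at hker
    -- the Gram matrix is invertible over ℚ
    have hGinj : Function.Injective ((Mᵀ * M).mulVec) := by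
      have h0 : (Mᵀ * M).mulVec 0 = 0 := by simp
      intro y y' hyy'
      have hsub : (Mᵀ * M).mulVec (y - y') = 0 := by
        rw [Matrix.mulVec_sub, hyy', sub_self]
      have hMv : M.mulVec (y - y') = 0 := by
        have hdot : dotProduct (M.mulVec (y - y')) (M.mulVec (y - y')) = 0 := by
          have : dotProduct (y - y') ((Mᵀ * M).mulVec (y - y')) = 0 := by
            rw [hsub, dotProduct_zero]
          rwa [← Matrix.mulVec_mulVec, Matrix.dotProduct_mulVec, Matrix.vecMul_transpose]
            at this
        exact sq_sum_zero _ hdot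
      have := hker (y - y')
      by_contra hne
      exact (this (fun h => hne (by rw [sub_eq_zero] at h; exact h ▸ rfl))) hMv
    have hGdet : ((Mᵀ * M).det : ℚ) ≠ 0 := by
      have := Matrix.mulVec_injective_iff_isUnit.mp hGinj
      exact (Matrix.isUnit_iff_isUnit_det _).mp this |>.ne_zero
    -- over ℂ
    set Mc : Matrix (Fin m₀) (Fin (a+1)) ℂ := M.map ⇑(Rat.castHom ℂ) with hMc
    have hMcx : Mc.mulVec x = 0 := by
      funext k
      have := hsol (N + 1 + k) (by omega)
      have h0k : (0 : Fin m₀ → ℂ) k = 0 := rfl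
      rw [Matrix.mulVec, dotProduct, h0k, ← this]
      refine Finset.sum_congr rfl fun i _ => ?_
      have hMki : Mc k i = ((z (N + 1 + (k:ℕ) - (i:ℕ)) : ℚ) : ℂ) := rfl
      rw [hMki, mul_comm]
    have hGcx : (Mcᵀ * Mc).mulVec x = 0 := by
      rw [← Matrix.mulVec_mulVec, hMcx, Matrix.mulVec_zero]
    have hGc : (Mcᵀ * Mc) = ((Mᵀ * M).map ⇑(Rat.castHom ℂ)) := by
      rw [Matrix.map_mul]
      rw [Matrix.transpose_map]
    have hGcdet : (Mcᵀ * Mc).det ≠ 0 := by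
      rw [hGc]
      have hmd := RingHom.map_det (Rat.castHom ℂ) (Mᵀ * M)
      rw [RingHom.mapMatrix_apply] at hmd
      rw [← hmd]
      intro h
      have h' : (((Mᵀ * M).det : ℚ) : ℂ) = 0 := h
      exact hGdet (by exact_mod_cast h')
    have hxz : x = 0 := by
      have hinj : Function.Injective ((Mcᵀ * Mc).mulVec) :=
        Matrix.mulVec_injective_iff_isUnit.mpr ((Matrix.isUnit_iff_isUnit_det _).mpr
          (isUnit_iff_ne_zero.mpr hGcdet))
      have h0 : (Mcᵀ * Mc).mulVec 0 = 0 := by simp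
      exact hinj (hGcx.trans h0.symm)
    exact hx hxz

end ZetaAux
end Descent
section Poly
namespace ZetaAux
open PowerSeries

variable {K : Type*} [CommRing K]

lemma coeff_polymul (q : Polynomial K) (Z : K⟦X⟧) (a n : ℕ)
    (hq : q.natDegree ≤ a) (hn : a ≤ n) :
    PowerSeries.coeff n ((q : K⟦X⟧) * Z) =
      ∑ i : Fin (a+1), q.coeff i * PowerSeries.coeff (n - (i:ℕ)) Z := by
  rw [PowerSeries.coeff_mul, Finset.Nat.sum_antidiagonal_eq_sum_range_succ_mk]
  simp only [Polynomial.coeff_coe]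
  rw [Fin.sum_univ_eq_sum_range (fun i => q.coeff i * PowerSeries.coeff (n - i) Z) (a+1)]
  symm
  refine Finset.sum_subset (Finset.range_subset_range.mpr (by omega)) ?_
  intro i _ hia
  rw [Polynomial.coeff_eq_zero_of_natDegree_lt (lt_of_le_of_lt hq (by simpa using hia)), zero_mul]

lemma exists_rat_poly (Z : ℚ⟦X⟧) (a b : ℕ) (Qc Pc : Polynomial ℂ)
    (hQ0 : Qc.coeff 0 = 1) (ha : Qc.natDegree ≤ a) (hb : Pc.natDegree ≤ b)
    (heq : (Qc : ℂ⟦X⟧) * PowerSeries.map (algebraMap ℚ ℂ) Z = (Pc : ℂ⟦X⟧)) :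
    ∃ p q : Polynomial ℚ, q ≠ 0 ∧ (q : ℚ⟦X⟧) * Z = (p : ℚ⟦X⟧) := by
  classical
  set N := max a b with hN
  set z : ℕ → ℚ := fun n => PowerSeries.coeff n Z with hz
  have hsol : ∀ n, N < n → ∑ i : Fin (a+1), Qc.coeff i * ((z (n - (i:ℕ)) : ℚ) : ℂ) = 0 := by
    intro n hn
    have h1 : PowerSeries.coeff n ((Qc : ℂ⟦X⟧) * PowerSeries.map (algebraMap ℚ ℂ) Z) = 0 := by
      rw [heq, Polynomial.coeff_coe]
      exact Polynomial.coeff_eq_zero_of_natDegree_lt (by omega)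
    rw [coeff_polymul Qc _ a n ha (by omega)] at h1
    rw [← h1]
    refine Finset.sum_congr rfl fun i _ => ?_
    rw [PowerSeries.coeff_map,
      show ((z (n - (i:ℕ)) : ℚ) : ℂ) = algebraMap ℚ ℂ (z (n - (i:ℕ))) from
        (eq_ratCast (algebraMap ℚ ℂ) _).symm]
  have hx : (fun i : Fin (a+1) => Qc.coeff i) ≠ 0 := by
    intro h
    have h2 := congrFun h 0
    rw [show (((0 : Fin (a+1))) : ℕ) = 0 from rfl, hQ0] at h2
    exact one_ne_zero h2
  obtain ⟨y, hy0, hy⟩ := descent z a N (le_max_left _ _) _ hx hsol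
  set q : Polynomial ℚ := ∑ i : Fin (a+1), Polynomial.monomial (i:ℕ) (y i) with hq
  have hqc : ∀ i : Fin (a+1), q.coeff (i:ℕ) = y i := by
    intro i
    rw [hq, Polynomial.finset_sum_coeff]
    rw [Finset.sum_eq_single i]
    · rw [Polynomial.coeff_monomial, if_pos rfl]
    · intro j _ hji
      rw [Polynomial.coeff_monomial, if_neg (fun h => hji (Fin.ext (by exact_mod_cast h)))]
    · intro h; exact absurd (Finset.mem_univ i) h
  have hqc' : ∀ m : ℕ, a < m → q.coeff m = 0 := by
    intro m hm
    rw [hq, Polynomial.finset_sum_coeff]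
    refine Finset.sum_eq_zero fun j _ => ?_
    rw [Polynomial.coeff_monomial, if_neg (by have := j.isLt; omega)]
  have hqd : q.natDegree ≤ a := Polynomial.natDegree_le_iff_coeff_eq_zero.mpr hqc'
  have hq0 : q ≠ 0 := by
    obtain ⟨i, hi⟩ := Function.ne_iff.mp hy0
    intro h
    refine hi ?_
    rw [← hqc i, h, Polynomial.coeff_zero, Pi.zero_apply]
  have hvan : ∀ n, N < n → PowerSeries.coeff n ((q : ℚ⟦X⟧) * Z) = 0 := by
    intro n hn
    rw [coeff_polymul q Z a n hqd (by omega), ← hy n hn]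
    exact Finset.sum_congr rfl fun i _ => by rw [hqc i]
  refine ⟨PowerSeries.trunc (N+1) ((q : ℚ⟦X⟧) * Z), q, hq0, ?_⟩
  ext n
  rw [Polynomial.coeff_coe, PowerSeries.coeff_trunc]
  split_ifs with h
  · rfl
  · exact hvan n (by omega)

/-- coercion of the product polynomial -/
lemma coe_prod (s : Multiset ℂ) :
    (((s.map fun l => 1 - Polynomial.C l * Polynomial.X).prod : Polynomial ℂ) : ℂ⟦X⟧)
      = (s.map fun l => 1 - PowerSeries.C l * PowerSeries.X).prod := by
  rw [← Polynomial.coeToPowerSeries.ringHom_apply, map_multiset_prod, Multiset.map_map]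
  congr 1
  refine Multiset.map_congr rfl fun l _ => ?_
  simp only [Function.comp_apply, map_sub, map_one, map_mul,
    Polynomial.coeToPowerSeries.ringHom_apply, Polynomial.coe_C, Polynomial.coe_X]

lemma coeff_zero_prod (s : Multiset ℂ) :
    ((s.map fun l => 1 - Polynomial.C l * Polynomial.X).prod).coeff 0 = 1 := by
  induction s using Multiset.induction with
  | empty => simp
  | cons l s ih =>
    rw [Multiset.map_cons, Multiset.prod_cons, Polynomial.mul_coeff_zero, ih, mul_one]
    simp

lemma natDegree_prod_le (s : Multiset ℂ) :
    ((s.map fun l => 1 - Polynomial.C l * Polynomial.X).prod).natDegree ≤ Multiset.card s := by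
  induction s using Multiset.induction with
  | empty => simp
  | cons l s ih =>
    rw [Multiset.map_cons, Multiset.prod_cons]
    refine le_trans (Polynomial.natDegree_mul_le) ?_
    rw [Multiset.card_cons]
    have h1 : (1 - Polynomial.C l * Polynomial.X).natDegree ≤ 1 := by
      refine le_trans (Polynomial.natDegree_sub_le _ _) ?_
      rw [max_le_iff]
      exact ⟨by simp, le_trans (Polynomial.natDegree_C_mul_le l Polynomial.X) (by simp)⟩
    omega

lemma prod_ne_zero (s : Multiset ℂ) :
    ((s.map fun l => 1 - Polynomial.C l * Polynomial.X).prod) ≠ 0 := by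
  intro h
  have := coeff_zero_prod s
  rw [h, Polynomial.coeff_zero] at this
  exact one_ne_zero this.symm

lemma natDegree_prod_eq (s : Multiset ℂ) (h0 : (0:ℂ) ∉ s) :
    ((s.map fun l => 1 - Polynomial.C l * Polynomial.X).prod).natDegree = Multiset.card s := by
  induction s using Multiset.induction with
  | empty => simp
  | cons l s ih =>
    rw [Multiset.map_cons, Multiset.prod_cons, Multiset.card_cons]
    have hl : l ≠ 0 := fun h => h0 (h ▸ Multiset.mem_cons_self l s)
    have hfac : (1 - Polynomial.C l * Polynomial.X).natDegree = 1 := by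
      rw [show (1 : Polynomial ℂ) - Polynomial.C l * Polynomial.X
          = Polynomial.C (-l) * Polynomial.X + Polynomial.C 1 from by
        rw [map_neg, map_one]; ring]
      exact Polynomial.natDegree_linear (neg_ne_zero.mpr hl)
    have hfne : (1 - Polynomial.C l * Polynomial.X) ≠ 0 := fun h => by
      rw [h, Polynomial.natDegree_zero] at hfac
      exact Nat.zero_ne_one hfac
    rw [Polynomial.natDegree_mul hfne (prod_ne_zero s),
      hfac, ih (fun h => h0 (Multiset.mem_cons_of_mem h))]
    omega

end ZetaAux
end Poly
section Master
namespace ZetaAux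
open PowerSeries

lemma master (c : ℕ → ℚ) (sp sm : Multiset ℂ)
    (hcs : ∀ n : ℕ, 1 ≤ n → (c n : ℂ) = (sp.map (· ^ n)).sum - (sm.map (· ^ n)).sum) :
    (sp.map fun l => 1 - PowerSeries.C l * PowerSeries.X).prod *
      PowerSeries.map (algebraMap ℚ ℂ)
        (PowerSeries.expOf (PowerSeries.mk fun n => if n = 0 then 0 else c n / n)) =
    (sm.map fun l => 1 - PowerSeries.C l * PowerSeries.X).prod := by
  have hmap : PowerSeries.map (algebraMap ℚ ℂ)
      (PowerSeries.mk fun n => if n = 0 then (0:ℚ) else c n / n)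
      = fseries sp - fseries sm := by
    ext n
    rw [PowerSeries.coeff_map, coeff_mk, map_sub, fseries, fseries, coeff_mk, coeff_mk]
    by_cases h : n = 0
    · subst h; simp
    · rw [if_neg h, if_neg h, if_neg h]
      have h1 : 1 ≤ n := Nat.one_le_iff_ne_zero.mpr h
      have h2 : algebraMap ℚ ℂ (c n / n) = ((c n / (n:ℚ) : ℚ) : ℂ) := eq_ratCast _ _
      rw [h2]
      push_cast
      rw [hcs n h1, sub_div]
  rw [map_expOf, hmap]
  have hadd : PowerSeries.expOf (fseries sp - fseries sm) * PowerSeries.expOf (fseries sm)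
      = PowerSeries.expOf (fseries sp) := by
    rw [← expOf_add (by rw [map_sub, constantCoeff_fseries, constantCoeff_fseries, sub_zero])
      (constantCoeff_fseries sm), sub_add_cancel]
  calc (sp.map fun l => 1 - PowerSeries.C l * PowerSeries.X).prod *
        PowerSeries.expOf (fseries sp - fseries sm)
      = (sp.map fun l => 1 - PowerSeries.C l * PowerSeries.X).prod *
          PowerSeries.expOf (fseries sp - fseries sm) *
          ((sm.map fun l => 1 - PowerSeries.C l * PowerSeries.X).prod *
            PowerSeries.expOf (fseries sm)) := by
        rw [prod_mul_expOf_fseries, mul_one]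
    _ = (sm.map fun l => 1 - PowerSeries.C l * PowerSeries.X).prod *
          ((sp.map fun l => 1 - PowerSeries.C l * PowerSeries.X).prod *
            (PowerSeries.expOf (fseries sp - fseries sm) * PowerSeries.expOf (fseries sm))) := by
        ring
    _ = (sm.map fun l => 1 - PowerSeries.C l * PowerSeries.X).prod *
          ((sp.map fun l => 1 - PowerSeries.C l * PowerSeries.X).prod *
            PowerSeries.expOf (fseries sp)) := by rw [hadd]
    _ = (sm.map fun l => 1 - PowerSeries.C l * PowerSeries.X).prod := by
        rw [prod_mul_expOf_fseries, mul_one]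

lemma coe_map_PS (r : Polynomial ℚ) :
    ((r.map (algebraMap ℚ ℂ) : Polynomial ℂ) : ℂ⟦X⟧)
      = PowerSeries.map (algebraMap ℚ ℂ) (r : ℚ⟦X⟧) := by
  ext n
  rw [Polynomial.coeff_coe, Polynomial.coeff_map, PowerSeries.coeff_map, Polynomial.coeff_coe]

lemma refine (Z : ℚ⟦X⟧) (hZ0 : PowerSeries.constantCoeff Z = 1)
    (p q : Polynomial ℚ) (hq : q ≠ 0) (hpq : (q : ℚ⟦X⟧) * Z = (p : ℚ⟦X⟧))
    (Qc Pc : Polynomial ℂ) (hQc0 : Qc.coeff 0 = 1)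
    (hQP : (Qc : ℂ⟦X⟧) * PowerSeries.map (algebraMap ℚ ℂ) Z = (Pc : ℂ⟦X⟧)) :
    ∃ p' q' : Polynomial ℚ, p'.coeff 0 = 1 ∧ q'.coeff 0 = 1 ∧
      (q' : ℚ⟦X⟧) * Z = (p' : ℚ⟦X⟧) ∧
      (q'.natDegree : ℤ) - p'.natDegree = (Qc.natDegree : ℤ) - Pc.natDegree := by
  classical
  set g := GCDMonoid.gcd p q with hg
  have hgne : g ≠ 0 := gcd_ne_zero_of_right hq
  set p₁ := p / g with hp₁
  set q₁ := q / g with hq₁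
  have hco : IsCoprime p₁ q₁ := isCoprime_div_gcd_div_gcd hq
  have hqe : g * q₁ = q := EuclideanDomain.mul_div_cancel' hgne (gcd_dvd_right p q)
  have hpe : g * p₁ = p := EuclideanDomain.mul_div_cancel' hgne (gcd_dvd_left p q)
  have hq₁ne : q₁ ≠ 0 := by
    intro h
    rw [h, mul_zero] at hqe
    exact hq hqe.symm
  have hgPS : (g : ℚ⟦X⟧) ≠ 0 := fun h => hgne (Polynomial.coe_eq_zero_iff.mp h)
  have hq₁Z : (q₁ : ℚ⟦X⟧) * Z = (p₁ : ℚ⟦X⟧) := by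
    apply mul_left_cancel₀ hgPS
    rw [show (g : ℚ⟦X⟧) * ((q₁ : ℚ⟦X⟧) * Z) = ((g * q₁ : Polynomial ℚ) : ℚ⟦X⟧) * Z from by
      rw [Polynomial.coe_mul]; ring, hqe, hpq, ← Polynomial.coe_mul, hpe]
  -- base change
  set q₁c := q₁.map (algebraMap ℚ ℂ) with hq₁c
  set p₁c := p₁.map (algebraMap ℚ ℂ) with hp₁c
  have hq₁cne : q₁c ≠ 0 := by
    rw [hq₁c, Ne, Polynomial.map_eq_zero_iff (algebraMap ℚ ℂ).injective]
    exact hq₁ne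
  have hcoc : IsCoprime q₁c p₁c := ((Polynomial.isCoprime_map (algebraMap ℚ ℂ)).mpr hco).symm
  have hq₁cZ : (q₁c : ℂ⟦X⟧) * PowerSeries.map (algebraMap ℚ ℂ) Z = (p₁c : ℂ⟦X⟧) := by
    rw [hq₁c, hp₁c, coe_map_PS, coe_map_PS, ← map_mul, hq₁Z]
  have hcross : q₁c * Pc = p₁c * Qc := by
    apply Polynomial.coe_inj.mp
    rw [Polynomial.coe_mul, Polynomial.coe_mul, ← hQP, ← hq₁cZ]
    ring
  have hdvd : q₁c ∣ Qc := by
    refine IsCoprime.dvd_of_dvd_mul_left hcoc ?_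
    exact ⟨Pc, hcross.symm⟩
  obtain ⟨s, hs⟩ := hdvd
  have hsne : s ≠ 0 := by
    intro h
    rw [h, mul_zero] at hs
    have := hQc0
    rw [hs, Polynomial.coeff_zero] at this
    exact zero_ne_one this
  have hPs : Pc = p₁c * s := by
    apply mul_left_cancel₀ hq₁cne
    rw [hcross, hs]
    ring
  -- coefficient 0 of q₁
  have hq₁c0ne : q₁.coeff 0 ≠ 0 := by
    intro h
    have h1 : q₁c.coeff 0 = 0 := by
      rw [hq₁c, Polynomial.coeff_map, h, map_zero]
    have h2 := hQc0
    rw [hs, Polynomial.mul_coeff_zero, h1, zero_mul] at h2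
    exact zero_ne_one h2
  have hp₁0 : p₁.coeff 0 = q₁.coeff 0 := by
    have := congrArg (PowerSeries.constantCoeff) hq₁Z
    rw [map_mul] at this
    rw [show PowerSeries.constantCoeff (q₁ : ℚ⟦X⟧) = q₁.coeff 0 from by
        rw [← Polynomial.coeff_coe, PowerSeries.coeff_zero_eq_constantCoeff_apply],
      hZ0, mul_one] at this
    rw [← Polynomial.coeff_coe, PowerSeries.coeff_zero_eq_constantCoeff_apply, this]
  have hp₁ne : p₁ ≠ 0 := by
    intro h
    rw [h, Polynomial.coeff_zero] at hp₁0
    exact hq₁c0ne hp₁0.symm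
  have hp₁cne : p₁c ≠ 0 := by
    rw [hp₁c, Ne, Polynomial.map_eq_zero_iff (algebraMap ℚ ℂ).injective]
    exact hp₁ne
  -- degrees
  have hdq : Qc.natDegree = q₁.natDegree + s.natDegree := by
    rw [hs, Polynomial.natDegree_mul hq₁cne hsne, hq₁c,
      Polynomial.natDegree_map_eq_of_injective (algebraMap ℚ ℂ).injective]
  have hdp : Pc.natDegree = p₁.natDegree + s.natDegree := by
    rw [hPs, Polynomial.natDegree_mul hp₁cne hsne, hp₁c,
      Polynomial.natDegree_map_eq_of_injective (algebraMap ℚ ℂ).injective]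
  -- normalize
  set c0 := q₁.coeff 0 with hc0
  refine ⟨Polynomial.C c0⁻¹ * p₁, Polynomial.C c0⁻¹ * q₁, ?_, ?_, ?_, ?_⟩
  · rw [Polynomial.coeff_C_mul, hp₁0, inv_mul_cancel₀ hq₁c0ne]
  · rw [Polynomial.coeff_C_mul, inv_mul_cancel₀ hq₁c0ne]
  · rw [Polynomial.coe_mul, Polynomial.coe_mul, mul_assoc, hq₁Z]
  · have hCne : Polynomial.C c0⁻¹ ≠ 0 := by
      rw [Ne, Polynomial.C_eq_zero]
      exact inv_ne_zero hq₁c0ne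
    rw [Polynomial.natDegree_mul hCne hq₁ne, Polynomial.natDegree_mul hCne hp₁ne,
      Polynomial.natDegree_C]
    omega

end ZetaAux
end Master
/-- Let `up`, `um` be endomorphisms of finite-dimensional complex vector spaces whose
trace differences `tr upⁿ - tr umⁿ` are rational, given by `c n` for `n ≥ 1`. Then the
power series `Z(t) = exp (Σ_{n ≥ 1} c n tⁿ/n) ∈ ℚ⟦t⟧` is rational; moreover, when `up`
and `um` are invertible, the polynomials `p`, `q` with `q * Z = p` can be chosen with
`p(0) = q(0) = 1` and `deg q - deg p = dim Vp - dim Vm`. -/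
theorem zeta_of_endomorphism_rational
    (Vp Vm : Type*) [AddCommGroup Vp] [Module ℂ Vp] [FiniteDimensional ℂ Vp]
    [AddCommGroup Vm] [Module ℂ Vm] [FiniteDimensional ℂ Vm]
    (up : Vp →ₗ[ℂ] Vp) (um : Vm →ₗ[ℂ] Vm)
    (c : ℕ → ℚ)
    (hc : ∀ n : ℕ, 1 ≤ n →
      (c n : ℂ) = LinearMap.trace ℂ Vp (up ^ n) - LinearMap.trace ℂ Vm (um ^ n)) :
    (∃ p q : Polynomial ℚ, q ≠ 0 ∧
        q * PowerSeries.expOf (PowerSeries.mk fun n => if n = 0 then 0 else c n / n) = p) ∧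
      ((IsUnit up ∧ IsUnit um) →
        ∃ p q : Polynomial ℚ, p.coeff 0 = 1 ∧ q.coeff 0 = 1 ∧
          q * PowerSeries.expOf (PowerSeries.mk fun n => if n = 0 then 0 else c n / n) = p ∧
          (q.natDegree : ℤ) - p.natDegree =
            (Module.finrank ℂ Vp : ℤ) - Module.finrank ℂ Vm) := by
  obtain ⟨sp, hspcard, hsptr, hspunit⟩ := ZetaAux.exists_eigen_multiset (up : Module.End ℂ Vp)
  obtain ⟨sm, hsmcard, hsmtr, hsmunit⟩ := ZetaAux.exists_eigen_multiset (um : Module.End ℂ Vm)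
  have hcs : ∀ n : ℕ, 1 ≤ n → (c n : ℂ) = (sp.map (· ^ n)).sum - (sm.map (· ^ n)).sum := by
    intro n hn
    rw [hc n hn, hsptr n, hsmtr n]
  have hmaster := ZetaAux.master c sp sm hcs
  set Z := PowerSeries.expOf (PowerSeries.mk fun n => if n = 0 then 0 else c n / n) with hZ
  set Qc := (sp.map fun l => 1 - Polynomial.C l * Polynomial.X).prod with hQc
  set Pc := (sm.map fun l => 1 - Polynomial.C l * Polynomial.X).prod with hPc
  have hQP : (Qc : PowerSeries ℂ) * PowerSeries.map (algebraMap ℚ ℂ) Z = (Pc : PowerSeries ℂ) := by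
    rw [hQc, hPc, ZetaAux.coe_prod, ZetaAux.coe_prod]
    exact hmaster
  obtain ⟨p, q, hq, hpq⟩ := ZetaAux.exists_rat_poly Z (Multiset.card sp) (Multiset.card sm)
    Qc Pc (ZetaAux.coeff_zero_prod sp) (ZetaAux.natDegree_prod_le sp)
    (ZetaAux.natDegree_prod_le sm) hQP
  constructor
  · exact ⟨p, q, hq, hpq⟩
  · rintro ⟨hup, hum⟩
    obtain ⟨p', q', h1, h2, h3, h4⟩ := ZetaAux.refine Z (ZetaAux.constantCoeff_expOf _) p q hq hpq
      Qc Pc (ZetaAux.coeff_zero_prod sp) hQP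
    refine ⟨p', q', h1, h2, h3, ?_⟩
    rw [h4, hQc, hPc, ZetaAux.natDegree_prod_eq sp (hspunit hup),
      ZetaAux.natDegree_prod_eq sm (hsmunit hum), hspcard, hsmcard]
end

section
/- Let F be a field, V₊ and V₋ finite-dimensional F-vector spaces of dimensions n₊ and n₋, and u₊ : V₊ → V₊, u₋ : V₋ → V₋ invertible linear endomorphisms. Consider the rational function Z(t) := det(id − t·u₋) / det(id − t·u₊) in the field F(t) of rational functions. Then the functional equation det(id − t⁻¹·u₋⁻¹) / det(id − t⁻¹·u₊⁻¹) = (−t)^{n₊ − n₋} · ( det(u₊) / det(u₋) ) · Z(t) holds in F(t); in other words, substituting u± ↦ u±⁻¹ and t ↦ t⁻¹ multiplies Z(t) by (−t)^{n₊ − n₋} · det(u₊)/det(u₋). -/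
set_option synthInstance.maxHeartbeats 1000000
set_option maxHeartbeats 1000000

section Aux
open Polynomial Matrix
variable {F : Type*} [Field F] {n : ℕ}


variable {F : Type*} [Field F] {n : ℕ}

lemma revpoly_ne_zero (A : Matrix (Fin n) (Fin n) F) :
    (1 - (X : Polynomial F) • A.map C).det ≠ 0 := by
  intro h
  have : Polynomial.eval 0 ((1 - (X : Polynomial F) • A.map C).det) = 1 := by
    rw [show Polynomial.eval 0 = (Polynomial.evalRingHom (0:F)) from rfl, RingHom.map_det,
      RingHom.mapMatrix_apply]
    have : (1 - (X : Polynomial F) • A.map C).map (Polynomial.evalRingHom (0:F)) = 1 := by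
      ext i j
      simp [Matrix.map_apply, Matrix.one_apply, apply_ite]
    rw [this, Matrix.det_one]
  rw [h] at this
  simp at this

lemma key (M N : Matrix (Fin n) (Fin n) F) (h : N * M = 1) :
    Polynomial.aeval ((RatFunc.X : RatFunc F)⁻¹) ((1 - (X : Polynomial F) • N.map C).det) =
    (-(RatFunc.X : RatFunc F)) ^ (-(n : ℤ)) * algebraMap F (RatFunc F) N.det *
      algebraMap (Polynomial F) (RatFunc F) ((1 - (X : Polynomial F) • M.map C).det) := by
  have hX : (RatFunc.X : RatFunc F) ≠ 0 := RatFunc.X_ne_zero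
  set x : RatFunc F := RatFunc.X with hxdef
  set N' := N.map (algebraMap F (RatFunc F)) with hN'
  set M' := M.map (algebraMap F (RatFunc F)) with hM'
  have hNM : N' * M' = 1 := by
    rw [hN', hM', ← Matrix.map_mul, h, Matrix.map_one _ (map_zero _) (map_one _)]
  have lhs_eq : Polynomial.aeval x⁻¹ ((1 - (X : Polynomial F) • N.map C).det) =
      (1 - x⁻¹ • N').det := by
    rw [AlgHom.map_det, AlgHom.mapMatrix_apply]
    congr 1
    ext i j
    simp [Matrix.map_apply, Matrix.one_apply, apply_ite, hN']
    ring
  have key2 : (1 : Matrix (Fin n) (Fin n) (RatFunc F)) - x⁻¹ • N' =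
      x⁻¹ • ((-N') * (1 - x • M')) := by
    rw [Matrix.neg_mul, Matrix.mul_sub, Matrix.mul_one, Matrix.mul_smul, hNM, neg_sub,
      smul_sub, smul_smul, inv_mul_cancel₀ hX, one_smul]
  have rhs2 : algebraMap (Polynomial F) (RatFunc F) ((1 - (X : Polynomial F) • M.map C).det)
      = (1 - x • M').det := by
    rw [RingHom.map_det, RingHom.mapMatrix_apply]
    congr 1
    ext i j
    simp [Matrix.map_apply, Matrix.one_apply, apply_ite, hM', RatFunc.algebraMap_C,
      hxdef]
    ring
  have hNdet : algebraMap F (RatFunc F) N.det = N'.det := by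
    rw [hN', RingHom.map_det, RingHom.mapMatrix_apply]
  rw [lhs_eq, key2, Matrix.det_smul, Matrix.det_mul, Matrix.det_neg, rhs2, hNdet,
    Fintype.card_fin]
  have hz : (-x) ^ (-(n : ℤ)) = (-1 : RatFunc F) ^ n * x⁻¹ ^ n := by
    rw [_root_.zpow_neg, zpow_natCast, ← inv_pow, ← neg_inv, neg_pow]
  rw [hz]
  ring

end Aux


/-- The reverse characteristic polynomial `det (id - t • u)` of an endomorphism `u`
of a finite-dimensional vector space `V`, a polynomial with constant term `1`. -/
noncomputable def revCharPoly {F V : Type*} [Field F] [AddCommGroup V] [Module F V]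
    [FiniteDimensional F V] (u : V →ₗ[F] V) : Polynomial F :=
  Matrix.det (1 - (Polynomial.X : Polynomial F) •
    (LinearMap.toMatrix (Module.finBasis F V) (Module.finBasis F V) u).map Polynomial.C)

/-- Functional equation: for invertible endomorphisms `up`, `um` (with inverses `vp`,
`vm`) of finite-dimensional `F`-vector spaces of dimensions `n₊ = dim Vp`,
`n₋ = dim Vm`, substituting `t ↦ t⁻¹` and `u ↦ u⁻¹` in
`Z(t) = det (id - t·um) / det (id - t·up)` yields, in the rational function field
`F(t)`, the identity
`det (id - t⁻¹·um⁻¹) / det (id - t⁻¹·up⁻¹) = (-t)^(n₊ - n₋) · (det up / det um) · Z(t)`. -/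
theorem zeta_functional_equation
    (F : Type*) [Field F]
    (Vp Vm : Type*) [AddCommGroup Vp] [Module F Vp] [FiniteDimensional F Vp]
    [AddCommGroup Vm] [Module F Vm] [FiniteDimensional F Vm]
    (up vp : Vp →ₗ[F] Vp) (um vm : Vm →ₗ[F] Vm)
    (hp : up ∘ₗ vp = LinearMap.id ∧ vp ∘ₗ up = LinearMap.id)
    (hm : um ∘ₗ vm = LinearMap.id ∧ vm ∘ₗ um = LinearMap.id) :
    Polynomial.aeval ((RatFunc.X : RatFunc F)⁻¹) (revCharPoly vm) /
        Polynomial.aeval ((RatFunc.X : RatFunc F)⁻¹) (revCharPoly vp) =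
      (-(RatFunc.X : RatFunc F)) ^
          ((Module.finrank F Vp : ℤ) - (Module.finrank F Vm : ℤ)) *
        (algebraMap F (RatFunc F) (LinearMap.det up) /
          algebraMap F (RatFunc F) (LinearMap.det um)) *
        (algebraMap (Polynomial F) (RatFunc F) (revCharPoly um) /
          algebraMap (Polynomial F) (RatFunc F) (revCharPoly up)) := by

  have hX : (RatFunc.X : RatFunc F) ≠ 0 := RatFunc.X_ne_zero
  have hnX : (-(RatFunc.X : RatFunc F)) ≠ 0 := neg_ne_zero.2 hX
  set Bp := Module.finBasis F Vp
  set Bm := Module.finBasis F Vm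
  set Mp := LinearMap.toMatrix Bp Bp up with hMp
  set Np := LinearMap.toMatrix Bp Bp vp with hNp
  set Mm := LinearMap.toMatrix Bm Bm um with hMm
  set Nm := LinearMap.toMatrix Bm Bm vm with hNm
  have hpNM : Np * Mp = 1 := by
    rw [hNp, hMp, ← LinearMap.toMatrix_comp, hp.2, LinearMap.toMatrix_id]
  have hmNM : Nm * Mm = 1 := by
    rw [hNm, hMm, ← LinearMap.toMatrix_comp, hm.2, LinearMap.toMatrix_id]
  have kp := key Mp Np hpNM
  have km := key Mm Nm hmNM
  have e1 : revCharPoly vp = (1 - (Polynomial.X : Polynomial F) • Np.map Polynomial.C).det := rfl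
  have e2 : revCharPoly vm = (1 - (Polynomial.X : Polynomial F) • Nm.map Polynomial.C).det := rfl
  have e3 : revCharPoly up = (1 - (Polynomial.X : Polynomial F) • Mp.map Polynomial.C).det := rfl
  have e4 : revCharPoly um = (1 - (Polynomial.X : Polynomial F) • Mm.map Polynomial.C).det := rfl
  -- determinants
  have hdup : Np.det = (LinearMap.det vp) := by rw [hNp, LinearMap.det_toMatrix]
  have hdum : Nm.det = (LinearMap.det vm) := by rw [hNm, LinearMap.det_toMatrix]
  have hvp1 : LinearMap.det up * LinearMap.det vp = 1 := by
    rw [← LinearMap.det_comp, hp.1, LinearMap.det_id]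
  have hvm1 : LinearMap.det um * LinearMap.det vm = 1 := by
    rw [← LinearMap.det_comp, hm.1, LinearMap.det_id]
  have hup0 : LinearMap.det up ≠ 0 := left_ne_zero_of_mul_eq_one hvp1
  have hum0 : LinearMap.det um ≠ 0 := left_ne_zero_of_mul_eq_one hvm1
  have hvp : LinearMap.det vp = (LinearMap.det up)⁻¹ :=
    (inv_eq_of_mul_eq_one_right hvp1).symm
  have hvm : LinearMap.det vm = (LinearMap.det um)⁻¹ :=
    (inv_eq_of_mul_eq_one_right hvm1).symm
  have hAp0 : algebraMap (Polynomial F) (RatFunc F) (revCharPoly up) ≠ 0 := by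
    rw [e3]
    exact fun h => revpoly_ne_zero Mp ((map_eq_zero_iff _ (IsFractionRing.injective _ _)).1 h)
  have hDup0 : algebraMap F (RatFunc F) (LinearMap.det up) ≠ 0 :=
    fun h => hup0 ((_root_.map_eq_zero _).1 h)
  have hDum0 : algebraMap F (RatFunc F) (LinearMap.det um) ≠ 0 :=
    fun h => hum0 ((_root_.map_eq_zero _).1 h)
  rw [e1, e2, kp, km, e3, e4, hdup, hdum, hvp, hvm, zpow_sub₀ hnX, map_inv₀, map_inv₀]
  have hzp : (-(RatFunc.X : RatFunc F)) ^ (-(Module.finrank F Vp : ℤ)) =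
      ((-(RatFunc.X : RatFunc F)) ^ ((Module.finrank F Vp : ℤ)))⁻¹ := _root_.zpow_neg _ _
  have hzm : (-(RatFunc.X : RatFunc F)) ^ (-(Module.finrank F Vm : ℤ)) =
      ((-(RatFunc.X : RatFunc F)) ^ ((Module.finrank F Vm : ℤ)))⁻¹ := _root_.zpow_neg _ _
  rw [hzp, hzm]
  have hA0 : (-(RatFunc.X : RatFunc F)) ^ ((Module.finrank F Vp : ℤ)) ≠ 0 := zpow_ne_zero _ hnX
  have hB0 : (-(RatFunc.X : RatFunc F)) ^ ((Module.finrank F Vm : ℤ)) ≠ 0 := zpow_ne_zero _ hnX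
  field_simp
end
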